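/- Let w be a string, let i ≥ 0, and consider two pairs (a,b) and (a',b') with a ≤ b, a' ≤ b', ⌈a/2^i⌉ = ⌈a'/2^i⌉, ⌈b/2^i⌉ = ⌈b'/2^i⌉, LCE(a,b) ≥ 3·2^i, and LCE(a',b') ≥ 3·2^i. Let p = |(b−b') − (a−a')|. If p ≠ 0 and b' ≤ b, then LCE(a, a+p) ≥ 2^{i+1}; equivalently, p is a period of the factor w[a, a+2^{i+1}+p−1]. -/

import Mathlib

def lcp {α : Type*} [DecidableEq α] : List α → List α → ℕ
  | a :: u, b :: v => if a = b then lcp u v + 1 else 0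
  | _, _ => 0

def LCE {α : Type*} [DecidableEq α] (w : List α) (i j : ℕ) : ℕ :=
  lcp (w.drop i) (w.drop j)

/-- A positive integer `p` is a period of `u` if `u[k] = u[k+p]` whenever both
indices are in range. -/
def HasPeriod {α : Type*} (u : List α) (p : ℕ) : Prop :=
  0 < p ∧ ∀ k, k + p < u.length → u[k]? = u[k + p]?

lemma lcp_spec {α : Type*} [DecidableEq α] :
    ∀ (u v : List α) (k : ℕ), k < lcp u v →
      ∃ x, u[k]? = some x ∧ v[k]? = some x := by
  intro u
  induction u with
  | nil => intro v k hk; simp [lcp] at hk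
  | cons a u ih =>
    intro v k hk
    cases v with
    | nil => simp [lcp] at hk
    | cons b v =>
      by_cases hab : a = b
      · cases k with
        | zero => exact ⟨a, by simp, by simp [hab]⟩
        | succ k =>
          simp only [lcp, if_pos hab] at hk
          obtain ⟨x, h1, h2⟩ := ih v k (by omega)
          exact ⟨x, by simpa using h1, by simpa using h2⟩
      · simp [lcp, hab] at hk

lemma lcp_ge {α : Type*} [DecidableEq α] :
    ∀ (u v : List α) (L : ℕ),
      (∀ k, k < L → ∃ x, u[k]? = some x ∧ v[k]? = some x) → L ≤ lcp u v := by
  intro u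
  induction u with
  | nil =>
    intro v L h
    cases L with
    | zero => exact Nat.zero_le _
    | succ L => obtain ⟨x, h1, _⟩ := h 0 (by omega); simp at h1
  | cons a u ih =>
    intro v L h
    cases v with
    | nil =>
      cases L with
      | zero => exact Nat.zero_le _
      | succ L => obtain ⟨x, _, h2⟩ := h 0 (by omega); simp at h2
    | cons b v =>
      cases L with
      | zero => exact Nat.zero_le _
      | succ L =>
        obtain ⟨x, h1, h2⟩ := h 0 (by omega)
        simp at h1 h2
        have hab : a = b := by rw [h1, h2]
        have := ih v L (fun k hk => by
          obtain ⟨x, hx1, hx2⟩ := h (k + 1) (by omega)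
          exact ⟨x, by simpa using hx1, by simpa using hx2⟩)
        simp only [lcp, if_pos hab]
        omega

/-- Two similar relevant level-`i` queries with `p ≠ 0` and `b' ≤ b` force
`LCE(a, a+p) ≥ 2^(i+1)`, i.e. `p` is a period of `w[a, a+2^(i+1)+p-1]`.
Positions are 0-based, so similarity `⌈a/2^i⌉ = ⌈a'/2^i⌉` (1-based) becomes
`a / 2^i = a' / 2^i`. -/
theorem similar_relevant_period {α : Type*} [DecidableEq α] (w : List α)
    (i a b a' b' p : ℕ) (hab : a ≤ b) (hab' : a' ≤ b')
    (hA : a / 2 ^ i = a' / 2 ^ i) (hB : b / 2 ^ i = b' / 2 ^ i)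
    (h1 : LCE w a b ≥ 3 * 2 ^ i) (h2 : LCE w a' b' ≥ 3 * 2 ^ i)
    (hp : (p : ℤ) = |((b : ℤ) - b') - ((a : ℤ) - a')|)
    (hp0 : p ≠ 0) (hbb : b' ≤ b) :
    LCE w a (a + p) ≥ 2 ^ (i + 1) ∧
      HasPeriod ((w.drop a).take (2 ^ (i + 1) + p)) p := by
  have h2i : 0 < 2 ^ i := Nat.pow_pos (by norm_num)
  have h2pow : 2 ^ (i + 1) = 2 * 2 ^ i := by ring
  -- extract pointwise equalities from the two LCE hypotheses
  have H1 : ∀ k, k < 3 * 2 ^ i → ∃ x, w[a + k]? = some x ∧ w[b + k]? = some x := by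
    intro k hk
    obtain ⟨x, hx1, hx2⟩ := lcp_spec (w.drop a) (w.drop b) k (lt_of_lt_of_le hk h1)
    rw [List.getElem?_drop] at hx1 hx2
    exact ⟨x, hx1, hx2⟩
  have H2 : ∀ k, k < 3 * 2 ^ i → ∃ x, w[a' + k]? = some x ∧ w[b' + k]? = some x := by
    intro k hk
    obtain ⟨x, hx1, hx2⟩ := lcp_spec (w.drop a') (w.drop b') k (lt_of_lt_of_le hk h2)
    rw [List.getElem?_drop] at hx1 hx2
    exact ⟨x, hx1, hx2⟩
  -- distance bounds from the similarity hypotheses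
  have hd : b - b' < 2 ^ i := by
    by_contra h
    push_neg at h
    have h' : (b' + 2 ^ i) / 2 ^ i ≤ b / 2 ^ i := Nat.div_le_div_right (by omega)
    rw [Nat.add_div_right _ h2i, hB] at h'
    exact Nat.not_succ_le_self _ h'
  have he : a' ≤ a → a - a' < 2 ^ i := by
    intro haa
    by_contra h
    push_neg at h
    have h' : (a' + 2 ^ i) / 2 ^ i ≤ a / 2 ^ i := Nat.div_le_div_right (by omega)
    rw [Nat.add_div_right _ h2i, hA] at h'
    exact Nat.not_succ_le_self _ h'
  -- resolve the absolute value
  have hpz : (p : ℤ) = ((b : ℤ) - b') - ((a : ℤ) - a') ∨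
      (p : ℤ) = ((a : ℤ) - a') - ((b : ℤ) - b') := by
    rcases abs_cases (((b : ℤ) - b') - ((a : ℤ) - a')) with ⟨h, _⟩ | ⟨h, _⟩
    · exact Or.inl (hp.trans h)
    · exact Or.inr (by rw [hp, h]; ring)
  -- the key pointwise claim
  have key : ∀ k, k < 2 ^ (i + 1) →
      ∃ x, w[a + k]? = some x ∧ w[a + p + k]? = some x := by
    intro k hk
    rcases le_total (a + b') (b + a') with hc | hc
    · -- p = (b - b') - (a - a'), i.e. p + a + b' = b + a'
      have hpe : p + a + b' = b + a' := by omega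
      obtain ⟨x, hx1, hx2⟩ := H1 k (by omega)
      obtain ⟨y, hy1, hy2⟩ := H2 (b - b' + k) (by omega)
      have e1 : b + k = b' + (b - b' + k) := by omega
      have e2 : a + p + k = a' + (b - b' + k) := by omega
      rw [e1, hy2] at hx2
      rw [e2, hy1]
      exact ⟨y, by rw [hx1, hx2], rfl⟩
    · -- p = (a - a') - (b - b'), i.e. p + b + a' = a + b'
      have haa : a' ≤ a := by omega
      have hae : a - a' < 2 ^ i := he haa
      have hpe : p + b + a' = a + b' := by omega
      obtain ⟨x, hx1, hx2⟩ := H2 (a - a' + k) (by omega)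
      obtain ⟨y, hy1, hy2⟩ := H1 (p + k) (by omega)
      have e1 : a + k = a' + (a - a' + k) := by omega
      have e2 : b' + (a - a' + k) = b + (p + k) := by omega
      have e3 : a + p + k = a + (p + k) := by omega
      rw [e2, hy2] at hx2
      rw [e1, hx1, e3, hy1]
      exact ⟨x, rfl, by rw [hx2]⟩
  have hLCE : LCE w a (a + p) ≥ 2 ^ (i + 1) := by
    apply lcp_ge
    intro k hk
    obtain ⟨x, hx1, hx2⟩ := key k hk
    refine ⟨x, ?_, ?_⟩ <;> rw [List.getElem?_drop]
    · exact hx1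
    · exact hx2
  refine ⟨hLCE, ⟨by omega, ?_⟩⟩
  intro k hk
  have hlen : ((w.drop a).take (2 ^ (i + 1) + p)).length ≤ 2 ^ (i + 1) + p := by
    simp [List.length_take]
  have hk2 : k < 2 ^ (i + 1) := by omega
  obtain ⟨x, hx1, hx2⟩ := key k hk2
  rw [List.getElem?_take, if_pos (by omega), List.getElem?_take, if_pos (by omega),
    List.getElem?_drop, List.getElem?_drop, hx1]
  rw [show a + (k + p) = a + p + k by omega, hx2]
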